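/- Let a < b be real numbers, c ∈ ℝ, g ∈ L^1(a,b), and let u(x) := c + ∫_a^x g(t) dt for x ∈ [a,b]. For s ∈ (0,1) the Riemann–Liouville derivative is D_{a+}^s u(x) = c (x−a)^{−s}/Γ(1−s) + I_{a+}^{1−s}[g](x) for a.e. x ∈ (a,b). Then D_{a+}^s u converges weakly-* in the sense of Radon measures on [a,b] to u'·dx + u(a)·δ_a as s → 1−; that is, for every continuous function φ : [a,b] → ℝ, ∫_a^b φ(x) D_{a+}^s u(x) dx → ∫_a^b φ(x) g(x) dx + c·φ(a) as s → 1−. -/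

import Mathlib

open MeasureTheory Set Filter ENNReal Metric

/-- The left Riemann–Liouville fractional integral of order `σ` with base point `a`. -/
noncomputable def RLint (a σ : ℝ) (u : ℝ → ℝ) (x : ℝ) : ℝ :=
  (Real.Gamma σ)⁻¹ * ∫ t in a..x, u t * (x - t) ^ (σ - 1)

section Helpers

lemma rpow_intOn {t c p : ℝ} (hp : -1 < p) :
    IntegrableOn (fun x => (x - t) ^ p) (Ioo t c) := by
  have h1 : IntervalIntegrable (fun x : ℝ => x ^ p) volume (t - t) (c - t) :=
    intervalIntegral.intervalIntegrable_rpow' hp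
  have h2 : IntervalIntegrable (fun x : ℝ => (x - t) ^ p) volume t c := by
    simpa using h1.comp_sub_right t
  rcases le_or_gt t c with h | h
  · exact ((intervalIntegrable_iff_integrableOn_Ioc_of_le h).1 h2).mono_set Ioo_subset_Ioc_self
  · simp [Ioo_eq_empty_of_le h.le, IntegrableOn]

lemma rpow_intOn2 {t c p : ℝ} (hp : -1 < p) :
    IntegrableOn (fun x => (c - x) ^ p) (Ioo t c) := by
  have h1 : IntervalIntegrable (fun x : ℝ => x ^ p) volume (c - c) (c - t) :=
    intervalIntegral.intervalIntegrable_rpow' hp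
  have h2 : IntervalIntegrable (fun x : ℝ => (c - x) ^ p) volume t c := by
    simpa using (h1.comp_sub_left c).symm
  rcases le_or_gt t c with h | h
  · exact ((intervalIntegrable_iff_integrableOn_Ioc_of_le h).1 h2).mono_set Ioo_subset_Ioc_self
  · simp [Ioo_eq_empty_of_le h.le, IntegrableOn]

lemma rpow_int_eval {t c σ : ℝ} (htc : t ≤ c) (hσ : 0 < σ) :
    ∫ x in Ioo t c, (x - t) ^ (σ - 1) = (c - t) ^ σ / σ := by
  rw [← integral_Ioc_eq_integral_Ioo, ← intervalIntegral.integral_of_le htc]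
  rw [intervalIntegral.integral_comp_sub_right (fun x => x ^ (σ - 1)) t]
  rw [integral_rpow (Or.inl (by linarith))]
  simp [sub_self, Real.zero_rpow hσ.ne']

/-- a.e. fundamental theorem of calculus for integrable functions (Lebesgue differentiation). -/

lemma rpow_int_eval2 {t c σ : ℝ} (htc : t ≤ c) (hσ : 0 < σ) :
    ∫ x in Ioo t c, (c - x) ^ (σ - 1) = (c - t) ^ σ / σ := by
  rw [← integral_Ioc_eq_integral_Ioo, ← intervalIntegral.integral_of_le htc]
  rw [intervalIntegral.integral_comp_sub_left (fun x => x ^ (σ - 1)) c]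
  rw [integral_rpow (Or.inl (by linarith))]
  simp [sub_self, Real.zero_rpow hσ.ne']

lemma ae_hasDerivAt_primitive {f : ℝ → ℝ} (hf : Integrable f volume) (a : ℝ) :
    ∀ᵐ x, HasDerivAt (fun y => ∫ t in a..y, f t) (f x) x := by
  filter_upwards [IsUnifLocDoublingMeasure.ae_tendsto_average_norm_sub (μ := volume)
    hf.locallyIntegrable 1] with x hx
  have havg : Tendsto (fun y : ℝ => ⨍ t in closedBall x |y - x|, ‖f t - f x‖)
      (nhdsWithin x {x}ᶜ) (nhds 0) := by
    apply hx (fun _ => x) (fun y => |y - x|)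
    · rw [tendsto_nhdsWithin_iff]
      constructor
      · have : Tendsto (fun y : ℝ => |y - x|) (nhds x) (nhds |x - x|) :=
          ((continuous_id.sub continuous_const).abs).tendsto x
        simpa using this.mono_left nhdsWithin_le_nhds
      · filter_upwards [self_mem_nhdsWithin] with y hy
        exact abs_pos.2 (sub_ne_zero.2 hy)
    · filter_upwards with y
      simpa using abs_nonneg (y - x)
  rw [hasDerivAt_iff_isLittleO, Asymptotics.isLittleO_iff]
  intro ε hε
  have hev : ∀ᶠ y in nhds x, y ≠ x →
      (⨍ t in closedBall x |y - x|, ‖f t - f x‖) < ε / 2 := by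
    have := havg.eventually (eventually_lt_nhds (half_pos hε))
    rwa [eventually_nhdsWithin_iff] at this
    
  filter_upwards [hev] with y hy
  rcases eq_or_ne y x with rfl | hyx
  · simp
  · have hI : (∫ t in a..y, f t) - ∫ t in a..x, f t = ∫ t in x..y, f t :=
      intervalIntegral.integral_interval_sub_left hf.intervalIntegrable hf.intervalIntegrable
    have hconst : ∫ t in x..y, f x = (y - x) • f x := by simp [mul_comm]
    have key : (∫ t in a..y, f t) - (∫ t in a..x, f t) - (y - x) • f x
        = ∫ t in x..y, (f t - f x) := by
      rw [hI, ← hconst, ← intervalIntegral.integral_sub hf.intervalIntegrable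
        (intervalIntegrable_const)]
    rw [key]
    have hsub : Set.uIoc x y ⊆ closedBall x |y - x| := by
      intro z hz
      rw [Set.mem_uIoc] at hz
      rw [mem_closedBall, Real.dist_eq, abs_le]
      have h1 := le_abs_self (y - x)
      have h2 := neg_abs_le (y - x)
      rcases hz with ⟨ha, hb⟩ | ⟨ha, hb⟩ <;> constructor <;> linarith
    have hint : IntegrableOn (fun t => ‖f t - f x‖) (closedBall x |y - x|) := by
      apply MeasureTheory.Integrable.norm
      apply hf.integrableOn.sub
      exact integrableOn_const (by
        rw [Real.volume_closedBall]; exact ENNReal.ofReal_ne_top)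
    have h1 : ‖∫ t in x..y, (f t - f x)‖ ≤ ∫ t in Set.uIoc x y, ‖f t - f x‖ :=
      intervalIntegral.norm_integral_le_integral_norm_uIoc
    have h2 : ∫ t in Set.uIoc x y, ‖f t - f x‖ ≤ ∫ t in closedBall x |y - x|, ‖f t - f x‖ := by
      apply setIntegral_mono_set hint
      · filter_upwards with t; positivity
      · exact HasSubset.Subset.eventuallyLE hsub
    have hvol : (volume (closedBall x |y - x|)).toReal = 2 * |y - x| := by
      rw [Real.volume_closedBall]
      rw [ENNReal.toReal_ofReal (by positivity)]
    have h3 : ∫ t in closedBall x |y - x|, ‖f t - f x‖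
        = (2 * |y - x|) * ⨍ t in closedBall x |y - x|, ‖f t - f x‖ := by
      rw [average_eq, smul_eq_mul, measureReal_restrict_apply_univ, measureReal_def, hvol]
      have h2x : (2 : ℝ) * |y - x| ≠ 0 := by
        simp [sub_ne_zero.2 hyx]
      field_simp
    calc ‖∫ t in x..y, (f t - f x)‖ ≤ ∫ t in closedBall x |y - x|, ‖f t - f x‖ := h1.trans h2
      _ = (2 * |y - x|) * ⨍ t in closedBall x |y - x|, ‖f t - f x‖ := h3
      _ ≤ (2 * |y - x|) * (ε / 2) := by
          apply mul_le_mul_of_nonneg_left (le_of_lt (hy hyx)) (by positivity)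
      _ = ε * ‖y - x‖ := by rw [Real.norm_eq_abs]; ring

lemma triangle_swap {a x : ℝ} (hax : a < x) {f : ℝ → ℝ} (hfm : Measurable f)
    (hf : IntegrableOn f (Ioo a x)) {K : ℝ → ℝ → ℝ}
    (hK : Measurable (Function.uncurry K))
    (hKi : ∀ r ∈ Ioo a x, IntegrableOn (fun t => K t r) (Ioo r x))
    {C : ℝ} (hKC : ∀ r ∈ Ioo a x, (∫ t in Ioo r x, |K t r|) ≤ C) :
    IntegrableOn (fun t => ∫ r in Ioo a t, f r * K t r) (Ioo a x) ∧
    (∫ t in Ioo a x, (∫ r in Ioo a t, f r * K t r)) =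
      ∫ r in Ioo a x, f r * ∫ t in Ioo r x, K t r := by
  set μ := volume.restrict (Ioo a x) with hμ
  set F : ℝ × ℝ → ℝ :=
    fun p => ({q : ℝ × ℝ | q.1 < q.2}).indicator (fun q => f q.1 * K q.2 q.1) p with hF
  have hFm : Measurable F := by
    apply Measurable.indicator
    · exact (hfm.comp measurable_fst).mul (hK.comp (measurable_snd.prodMk measurable_fst))
    · exact measurableSet_lt measurable_fst measurable_snd
  have hset1 : ∀ r, a < r → Ioo a x ∩ Ioi r = Ioo r x := by
    intro r har
    ext y
    simp only [mem_inter_iff, mem_Ioo, mem_Ioi]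
    constructor
    · rintro ⟨⟨h1, h2⟩, h3⟩; exact ⟨h3, h2⟩
    · rintro ⟨h1, h2⟩; exact ⟨⟨har.trans h1, h2⟩, h1⟩
  have hset2 : ∀ t, t ≤ x → Ioo a x ∩ Iio t = Ioo a t := by
    intro t htx
    ext y
    simp only [mem_inter_iff, mem_Ioo, mem_Iio]
    constructor
    · rintro ⟨⟨h1, h2⟩, h3⟩; exact ⟨h1, h3⟩
    · rintro ⟨h1, h2⟩; exact ⟨⟨h1, lt_of_lt_of_le h2 htx⟩, h2⟩
  have hrow : ∀ r ∈ Ioo a x, (fun t => F (r, t)) = (Ioi r).indicator (fun t => f r * K t r) := by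
    intro r _
    ext t
    simp only [hF, Set.indicator, mem_setOf_eq, mem_Ioi]
  have hFI : Integrable F (μ.prod μ) := by
    rw [integrable_prod_iff hFm.aestronglyMeasurable]
    constructor
    · filter_upwards [ae_restrict_mem measurableSet_Ioo] with r hr
      rw [hrow r hr, hμ, integrable_indicator_iff measurableSet_Ioi]
      rw [IntegrableOn, Measure.restrict_restrict measurableSet_Ioi, Set.inter_comm,
        hset1 r hr.1]
      exact (hKi r hr).const_mul (f r)
    · apply Integrable.mono' ((hf.norm).mul_const C)
      · exact (hFm.norm.aestronglyMeasurable).integral_prod_right'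
      · filter_upwards [ae_restrict_mem measurableSet_Ioo] with r hr
        have hnn : 0 ≤ ∫ t, ‖F (r, t)‖ ∂μ := integral_nonneg fun t => norm_nonneg _
        rw [Real.norm_of_nonneg hnn]
        have : ∀ t, ‖F (r, t)‖ = (Ioi r).indicator (fun t => |f r| * |K t r|) t := by
          intro t
          rw [congrFun (hrow r hr) t, norm_indicator_eq_indicator_norm]
          simp [Set.indicator, abs_mul]
        rw [show (fun t => ‖F (r, t)‖) = (Ioi r).indicator (fun t => |f r| * |K t r|) from
          funext this]
        rw [hμ, integral_indicator measurableSet_Ioi,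
          Measure.restrict_restrict measurableSet_Ioi, Set.inter_comm, hset1 r hr.1,
          integral_const_mul]
        have : ‖f r‖ = |f r| := rfl
        rw [this]
        exact mul_le_mul_of_nonneg_left (hKC r hr) (abs_nonneg _)
  have hcol : ∀ t ∈ Ioo a x, (∫ r, F (r, t) ∂μ) = ∫ r in Ioo a t, f r * K t r := by
    intro t ht
    have : (fun r => F (r, t)) = (Iio t).indicator (fun r => f r * K t r) := by
      ext r
      simp only [hF, Set.indicator, mem_setOf_eq, mem_Iio]
    rw [this, hμ, integral_indicator measurableSet_Iio,
      Measure.restrict_restrict measurableSet_Iio, Set.inter_comm, hset2 t ht.2.le]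
  have hcol2 : ∀ r ∈ Ioo a x, (∫ t, F (r, t) ∂μ) = f r * ∫ t in Ioo r x, K t r := by
    intro r hr
    rw [hrow r hr, hμ, integral_indicator measurableSet_Ioi,
      Measure.restrict_restrict measurableSet_Ioi, Set.inter_comm, hset1 r hr.1,
      integral_const_mul]
  constructor
  · apply (hFI.integral_prod_right).congr
    filter_upwards [ae_restrict_mem measurableSet_Ioo] with t ht
    exact hcol t ht
  · calc (∫ t in Ioo a x, ∫ r in Ioo a t, f r * K t r)
        = ∫ t, (∫ r, F (r, t) ∂μ) ∂μ := by
          apply setIntegral_congr_ae measurableSet_Ioo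
          filter_upwards with t ht
          exact (hcol t ht).symm
      _ = ∫ r, (∫ t, F (r, t) ∂μ) ∂μ :=
          (integral_integral_swap (f := fun r t => F (r, t)) hFI).symm
      _ = ∫ r in Ioo a x, f r * ∫ t in Ioo r x, K t r := by
          apply setIntegral_congr_ae measurableSet_Ioo
          filter_upwards with r hr
          exact hcol2 r hr

lemma approx_id {b t : ℝ} (htb : t < b) {φ : ℝ → ℝ} (hφ : Continuous φ) {M : ℝ}
    (hM : ∀ x, |φ x| ≤ M) :
    Tendsto (fun σ : ℝ => σ * ∫ x in Ioo t b, φ x * (x - t) ^ (σ - 1))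
      (nhdsWithin 0 (Ioi 0)) (nhds (φ t)) := by
  have hM0 : 0 ≤ M := (abs_nonneg (φ t)).trans (hM t)
  have hbt : (0:ℝ) < b - t := sub_pos.2 htb
  set G : ℝ → ℝ := fun σ => σ * ∫ x in Ioo t b, (φ x - φ t) * (x - t) ^ (σ - 1) with hG
  -- integrability facts
  have hint1 : ∀ σ : ℝ, 0 < σ →
      IntegrableOn (fun x => (φ x - φ t) * (x - t) ^ (σ - 1)) (Ioo t b) := by
    intro σ hσ
    apply Integrable.bdd_mul (c := 2 * M) (rpow_intOn (by linarith))
    · exact ((hφ.sub continuous_const).aestronglyMeasurable)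
    · filter_upwards with x
      calc ‖φ x - φ t‖ ≤ ‖φ x‖ + ‖φ t‖ := norm_sub_le _ _
        _ ≤ M + M := add_le_add (hM x) (hM t)
        _ = 2 * M := by ring
  -- decomposition
  have hdecomp : ∀ σ : ℝ, 0 < σ →
      σ * ∫ x in Ioo t b, φ x * (x - t) ^ (σ - 1) = G σ + φ t * (b - t) ^ σ := by
    intro σ hσ
    have h1 : ∀ x ∈ Ioo t b, φ x * (x - t) ^ (σ - 1)
        = (φ x - φ t) * (x - t) ^ (σ - 1) + φ t * (x - t) ^ (σ - 1) := by
      intro x _; ring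
    rw [setIntegral_congr_fun measurableSet_Ioo h1]
    rw [integral_add (hint1 σ hσ) ((rpow_intOn (by linarith)).const_mul (φ t))]
    rw [integral_const_mul, rpow_int_eval htb.le hσ]
    rw [hG]
    field_simp
  -- constant part tendsto
  have hconst : Tendsto (fun σ : ℝ => φ t * (b - t) ^ σ)
      (nhdsWithin 0 (Ioi 0)) (nhds (φ t)) := by
    have h1 : ContinuousAt (fun σ : ℝ => (b - t) ^ σ) 0 :=
      Real.continuousAt_const_rpow hbt.ne'
    have h2 : Tendsto (fun σ : ℝ => (b - t) ^ σ) (nhdsWithin 0 (Ioi 0)) (nhds 1) := by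
      have := h1.tendsto.mono_left
        (nhdsWithin_le_nhds : nhdsWithin (0:ℝ) (Ioi 0) ≤ nhds 0)
      simpa [Real.rpow_zero] using this
    simpa using h2.const_mul (φ t)
  -- G tendsto 0
  have hGto : Tendsto G (nhdsWithin 0 (Ioi 0)) (nhds 0) := by
    rw [NormedAddCommGroup.tendsto_nhds_zero]
    intro ε hε
    obtain ⟨η, hη, hηc⟩ : ∃ η > 0, ∀ x : ℝ, |x - t| < η → |φ x - φ t| < ε / 4 := by
      have := Metric.continuousAt_iff.1 (hφ.continuousAt (x := t))
      obtain ⟨δ, hδ, hδc⟩ := this (ε / 4) (by linarith)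
      exact ⟨δ, hδ, fun x hx => by simpa [Real.dist_eq] using hδc (by simpa [Real.dist_eq] using hx)⟩
    set B : ℝ → ℝ := fun σ =>
      ε / 4 * (b - t) ^ σ + 2 * M / η * (σ * ((b - t) ^ (σ + 1) / (σ + 1))) with hB
    have hBto : Tendsto B (nhdsWithin 0 (Ioi 0)) (nhds (ε / 4)) := by
      have h1 : Tendsto (fun σ : ℝ => (b - t) ^ σ) (nhdsWithin 0 (Ioi 0)) (nhds 1) := by
        have := (Real.continuousAt_const_rpow (b := (0:ℝ)) hbt.ne').tendsto.mono_left
          (nhdsWithin_le_nhds : nhdsWithin (0:ℝ) (Ioi 0) ≤ nhds 0)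
        simpa [Real.rpow_zero] using this
      have h2 : Tendsto (fun σ : ℝ => (b - t) ^ (σ + 1)) (nhdsWithin 0 (Ioi 0))
          (nhds ((b - t) ^ (1:ℝ))) := by
        apply Tendsto.comp (Real.continuousAt_const_rpow (b := (1:ℝ)) hbt.ne').tendsto
        have : Tendsto (fun σ : ℝ => σ + 1) (nhds 0) (nhds 1) := by
          simpa using (continuous_add_right (1:ℝ)).tendsto (0:ℝ)
        exact this.mono_left nhdsWithin_le_nhds
      have h3 : Tendsto (fun σ : ℝ => σ + 1) (nhdsWithin 0 (Ioi 0)) (nhds 1) := by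
        have : Tendsto (fun σ : ℝ => σ + 1) (nhds 0) (nhds 1) := by
          simpa using (continuous_add_right (1:ℝ)).tendsto (0:ℝ)
        exact this.mono_left nhdsWithin_le_nhds
      have h0 : Tendsto (fun σ : ℝ => σ) (nhdsWithin 0 (Ioi 0)) (nhds 0) :=
        tendsto_id.mono_left nhdsWithin_le_nhds
      have := ((h1.const_mul (ε / 4)).add
        (((h0.mul (h2.div h3 one_ne_zero))).const_mul (2 * M / η)))
      simpa using this
    have hlt : ∀ᶠ σ in nhdsWithin 0 (Ioi 0), B σ < ε / 2 :=
      hBto.eventually (eventually_lt_nhds (by linarith))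
    have hpos : ∀ᶠ σ in nhdsWithin 0 (Ioi 0), (0:ℝ) < σ :=
      eventually_mem_nhdsWithin.mono fun σ hσ => hσ
    filter_upwards [hlt, hpos] with σ hσB hσ
    have hGb : |G σ| ≤ B σ := by
      have habs : |∫ x in Ioo t b, (φ x - φ t) * (x - t) ^ (σ - 1)|
          ≤ ∫ x in Ioo t b, |(φ x - φ t) * (x - t) ^ (σ - 1)| :=
        by
          have := norm_integral_le_integral_norm (μ := volume.restrict (Ioo t b))
            (f := fun x => (φ x - φ t) * (x - t) ^ (σ - 1))
          simpa only [Real.norm_eq_abs] using this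
      have hmono : (∫ x in Ioo t b, |(φ x - φ t) * (x - t) ^ (σ - 1)|)
          ≤ ∫ x in Ioo t b,
            (ε / 4 * (x - t) ^ (σ - 1) + 2 * M / η * (x - t) ^ (σ + 1 - 1)) := by
        apply setIntegral_mono_on ((hint1 σ hσ).abs)
        · exact ((rpow_intOn (p := σ - 1) (by linarith)).const_mul _).add
            ((rpow_intOn (p := σ + 1 - 1) (by linarith)).const_mul _)
        · exact measurableSet_Ioo
        · intro x hx
          have hxt : (0:ℝ) < x - t := sub_pos.2 hx.1
          have hk : (0:ℝ) ≤ (x - t) ^ (σ - 1) := Real.rpow_nonneg hxt.le _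
          rw [abs_mul, abs_of_nonneg hk]
          have hφb : |φ x - φ t| ≤ ε / 4 + 2 * M / η * (x - t) := by
            rcases lt_or_ge (|x - t|) η with h | h
            · have := (hηc x h).le
              have h2 : 0 ≤ 2 * M / η * (x - t) := by positivity
              linarith
            · have h1 : (1:ℝ) ≤ (x - t) / η := by
                rw [le_div_iff₀ hη]
                rw [abs_of_nonneg hxt.le] at h
                linarith
              have h2 : 2 * M ≤ 2 * M / η * (x - t) := by
                calc 2 * M = 2 * M * 1 := by ring
                  _ ≤ 2 * M * ((x - t) / η) := by
                      apply mul_le_mul_of_nonneg_left h1 (by positivity)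
                  _ = 2 * M / η * (x - t) := by ring
              have h3 : |φ x - φ t| ≤ 2 * M := by
                calc |φ x - φ t| ≤ |φ x| + |φ t| := abs_sub _ _
                  _ ≤ M + M := add_le_add (hM x) (hM t)
                  _ = 2 * M := by ring
              linarith [le_trans h3 h2, hε]
          calc |φ x - φ t| * (x - t) ^ (σ - 1)
              ≤ (ε / 4 + 2 * M / η * (x - t)) * (x - t) ^ (σ - 1) :=
                mul_le_mul_of_nonneg_right hφb hk
            _ = ε / 4 * (x - t) ^ (σ - 1) + 2 * M / η * (x - t) ^ (σ + 1 - 1) := by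
                have : (x - t) * (x - t) ^ (σ - 1) = (x - t) ^ (σ + 1 - 1) := by
                  rw [show σ + 1 - 1 = 1 + (σ - 1) by ring, Real.rpow_add hxt,
                    Real.rpow_one]
                rw [← this]; ring
      have hval : (∫ x in Ioo t b,
          (ε / 4 * (x - t) ^ (σ - 1) + 2 * M / η * (x - t) ^ (σ + 1 - 1)))
          = ε / 4 * ((b - t) ^ σ / σ) + 2 * M / η * ((b - t) ^ (σ + 1) / (σ + 1)) := by
        rw [integral_add (((rpow_intOn (p := σ - 1) (by linarith)).const_mul _))
          (((rpow_intOn (p := σ + 1 - 1) (by linarith)).const_mul _))]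
        rw [integral_const_mul, integral_const_mul, rpow_int_eval htb.le hσ,
          rpow_int_eval htb.le (by linarith : (0:ℝ) < σ + 1)]
      rw [hG]
      rw [abs_mul, abs_of_nonneg hσ.le]
      calc σ * |∫ x in Ioo t b, (φ x - φ t) * (x - t) ^ (σ - 1)|
          ≤ σ * (ε / 4 * ((b - t) ^ σ / σ) + 2 * M / η * ((b - t) ^ (σ + 1) / (σ + 1))) := by
            apply mul_le_mul_of_nonneg_left _ hσ.le
            rw [← hval]
            exact habs.trans hmono
        _ = B σ := by rw [hB]; field_simp
    calc ‖G σ‖ = |G σ| := rfl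
      _ ≤ B σ := hGb
      _ < ε / 2 := hσB
      _ < ε := by linarith
  -- combine
  have := hGto.add hconst
  rw [zero_add] at this
  apply this.congr'
  filter_upwards [eventually_mem_nhdsWithin] with σ hσ
  exact (hdecomp σ hσ).symm

lemma pow_le_max {b a u σ : ℝ} (hσ : 0 < σ) (hσ1 : σ ≤ 1) (hu : 0 ≤ u) (hub : u ≤ b - a) :
    u ^ σ ≤ max 1 (b - a) := by
  rcases le_or_gt u 1 with h | h
  · exact le_max_of_le_left (Real.rpow_le_one hu h hσ.le)
  · calc u ^ σ ≤ u ^ (1:ℝ) := Real.rpow_le_rpow_of_exponent_le h.le hσ1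
      _ = u := Real.rpow_one u
      _ ≤ max 1 (b - a) := le_max_of_le_right hub

end Helpers

/-- for `u(x) = c + ∫_a^x g`, `D_{a+}^s u` converges weakly-* (as Radon
measures on `[a,b]`) to `u'·dx + u(a)·δ_a` as `s → 1-`. -/
theorem rl_deriv_weak_star_W11 (a b : ℝ) (hab : a < b) (c : ℝ)
    (g : ℝ → ℝ) (hg : IntegrableOn g (Set.Ioo a b)) :
    (∀ s ∈ Set.Ioo (0:ℝ) 1, ∀ᵐ x ∂(volume.restrict (Set.Ioo a b)),
      HasDerivAt (RLint a (1 - s) (fun y => c + ∫ t in a..y, g t))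
        (c * (x - a) ^ (-s) / Real.Gamma (1 - s) + RLint a (1 - s) g x) x) ∧
    (∀ φ : ℝ → ℝ, ContinuousOn φ (Set.Icc a b) →
      Filter.Tendsto
        (fun s : ℝ => ∫ x in Set.Ioo a b,
          φ x * (c * (x - a) ^ (-s) / Real.Gamma (1 - s) + RLint a (1 - s) g x))
        (nhdsWithin 1 (Set.Iio 1))
        (nhds ((∫ x in Set.Ioo a b, φ x * g x) + c * φ a))) := by
  -- measurable globally integrable version of g
  set g' : ℝ → ℝ := (Ioo a b).indicator (hg.1.mk g) with hg'def
  have hg'm : Measurable g' :=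
    (hg.1.stronglyMeasurable_mk.measurable).indicator measurableSet_Ioo
  have hgg' : g =ᵐ[volume.restrict (Ioo a b)] g' := by
    filter_upwards [hg.1.ae_eq_mk, ae_restrict_mem measurableSet_Ioo] with t h1 h2
    rw [hg'def, indicator_of_mem h2]
    exact h1
  have hg'on : IntegrableOn g' (Ioo a b) := hg.congr hgg'
  have hg'i : Integrable g' volume := by
    rw [hg'def, ← integrable_indicator_iff measurableSet_Ioo] at hg'on
    simpa [hg'def, Set.indicator_indicator] using hg'on
  -- agreement of g and g' on subintervals
  have hsub3 : ∀ y, y ≤ b → ∀ {h : ℝ → ℝ}, (g =ᵐ[volume.restrict (Ioo a b)] h) →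
      g =ᵐ[volume.restrict (Ioc a y)] h := by
    intro y hy h hh
    rw [← restrict_Ioo_eq_restrict_Ioc]
    exact ae_restrict_of_ae_restrict_of_subset (Ioo_subset_Ioo le_rfl hy) hh
  have hIeq : ∀ y ∈ Ioc a b, (∫ t in a..y, g t) = ∫ r in Ioo a y, g' r := by
    intro y hy
    rw [intervalIntegral.integral_of_le hy.1.le, ← restrict_Ioo_eq_restrict_Ioc]
    apply integral_congr_ae
    exact ae_restrict_of_ae_restrict_of_subset (Ioo_subset_Ioo le_rfl hy.2) hgg'
  -- kernels measurability
  have hKm1 : ∀ z : ℝ, ∀ p : ℝ, Measurable (Function.uncurry (fun t r : ℝ => (z - t) ^ p)) :=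
    fun z p => ((measurable_const.sub measurable_fst).pow_const p)
  have hKm2 : ∀ p : ℝ, Measurable (Function.uncurry (fun t r : ℝ => (t - r) ^ p)) :=
    fun p => ((measurable_fst.sub measurable_snd).pow_const p)
  constructor
  · -- PART 1
    rintro s ⟨hs0, hs1⟩
    set σ : ℝ := 1 - s with hσdef
    have hσ : 0 < σ := by simp [hσdef]; linarith
    have hσ1 : σ ≤ 1 := by simp [hσdef]; linarith
    -- the inner RL integral of g'
    set H0 : ℝ → ℝ := fun y => ∫ r in Ioo a y, g' r * (y - r) ^ (σ - 1) with hH0def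
    set H : ℝ → ℝ := (Ioo a b).indicator H0 with hHdef
    have hswapb := triangle_swap hab hg'm hg'i.integrableOn (K := fun t r => (t - r) ^ (σ - 1))
      (hKm2 (σ - 1))
      (fun r _ => rpow_intOn (by linarith))
      (C := (b - a) ^ σ / σ)
      (by
        intro r hr
        have h1 : ∀ t ∈ Ioo r b, |(t - r) ^ (σ - 1)| = (t - r) ^ (σ - 1) := by
          intro t ht
          exact abs_of_nonneg (Real.rpow_nonneg (by linarith [ht.1]) _)
        rw [setIntegral_congr_fun measurableSet_Ioo h1, rpow_int_eval hr.2.le hσ]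
        have hmono : (b - r) ^ σ ≤ (b - a) ^ σ :=
          Real.rpow_le_rpow (by linarith [hr.2]) (by linarith [hr.1]) hσ.le
        exact (div_le_div_iff_of_pos_right hσ).mpr hmono)
    have hH0int : IntegrableOn H0 (Ioo a b) := hswapb.1
    have hHint : Integrable H volume := by
      rw [hHdef, integrable_indicator_iff measurableSet_Ioo]
      exact hH0int
    -- primitive of g'
    set P : ℝ → ℝ := fun t => ∫ t' in a..t, g' t' with hPdef
    have hPb : ∀ t, |P t| ≤ ∫ t', |g' t'| := by
      intro t
      calc |P t| ≤ ∫ t' in Set.uIoc a t, ‖g' t'‖ := by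
            simpa [Real.norm_eq_abs] using
              (intervalIntegral.norm_integral_le_integral_norm_uIoc (a := a) (b := t)
                (f := g') (μ := volume))
        _ ≤ ∫ t', ‖g' t'‖ := setIntegral_le_integral hg'i.norm
            (by filter_upwards with t'; positivity)
        _ = ∫ t', |g' t'| := by simp [Real.norm_eq_abs]
    have hPeq : ∀ t ∈ Ioc a b, P t = ∫ r in Ioo a t, g' r := by
      intro t ht
      simp only [hPdef]
      rw [intervalIntegral.integral_of_le ht.1.le, ← restrict_Ioo_eq_restrict_Ioc]
    -- the identity on Ioo a b
    have hid : ∀ y ∈ Ioo a b, RLint a σ (fun w => c + ∫ t in a..w, g t) y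
        = (Real.Gamma σ)⁻¹ * (c * ((y - a) ^ σ / σ)) + (Real.Gamma σ)⁻¹ * ∫ t in a..y, H t := by
      intro y hy
      have hay : a < y := hy.1
      have hyb : y < b := hy.2
      have habs1 : ∀ r ∈ Ioo a y, (∫ t in Ioo r y, |(y - t) ^ (σ - 1)|) ≤ (b - a) ^ σ / σ := by
        intro r hr
        have h1 : ∀ t ∈ Ioo r y, |(y - t) ^ (σ - 1)| = (y - t) ^ (σ - 1) := fun t ht =>
          abs_of_nonneg (Real.rpow_nonneg (by linarith [ht.2]) _)
        rw [setIntegral_congr_fun measurableSet_Ioo h1, rpow_int_eval2 hr.2.le hσ]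
        have hmono : (y - r) ^ σ ≤ (b - a) ^ σ :=
          Real.rpow_le_rpow (by linarith [hr.2]) (by linarith [hr.1]) hσ.le
        exact (div_le_div_iff_of_pos_right hσ).mpr hmono
      have habs2 : ∀ r ∈ Ioo a y, (∫ t in Ioo r y, |(t - r) ^ (σ - 1)|) ≤ (b - a) ^ σ / σ := by
        intro r hr
        have h1 : ∀ t ∈ Ioo r y, |(t - r) ^ (σ - 1)| = (t - r) ^ (σ - 1) := fun t ht =>
          abs_of_nonneg (Real.rpow_nonneg (by linarith [ht.1]) _)
        rw [setIntegral_congr_fun measurableSet_Ioo h1, rpow_int_eval hr.2.le hσ]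
        have hmono : (y - r) ^ σ ≤ (b - a) ^ σ :=
          Real.rpow_le_rpow (by linarith [hr.2]) (by linarith [hr.1]) hσ.le
        exact (div_le_div_iff_of_pos_right hσ).mpr hmono
      have hsw1 := triangle_swap hay hg'm hg'i.integrableOn
        (K := fun t r => (y - t) ^ (σ - 1)) (hKm1 y (σ - 1))
        (fun r hr => rpow_intOn2 (by linarith)) habs1
      have hsw2 := triangle_swap hay hg'm hg'i.integrableOn
        (K := fun t r => (t - r) ^ (σ - 1)) (hKm2 (σ - 1))
        (fun r hr => rpow_intOn (by linarith)) habs2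
      set X : ℝ := ∫ r in Ioo a y, g' r * ((y - r) ^ σ / σ) with hXdef
      -- LHS computation
      have hLHS : (∫ t in a..y, (c + ∫ t' in a..t, g t') * (y - t) ^ (σ - 1))
          = c * ((y - a) ^ σ / σ) + X := by
        rw [intervalIntegral.integral_of_le hay.le, integral_Ioc_eq_integral_Ioo]
        have hcong : ∀ t ∈ Ioo a y, (c + ∫ t' in a..t, g t') * (y - t) ^ (σ - 1)
            = c * (y - t) ^ (σ - 1) + P t * (y - t) ^ (σ - 1) := by
          intro t ht
          have ht' : t ∈ Ioc a b := ⟨ht.1, by linarith [ht.2]⟩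
          rw [hPeq t ht', ← hIeq t ht']
          ring
        rw [setIntegral_congr_fun measurableSet_Ioo hcong]
        have i1 : IntegrableOn (fun t => c * (y - t) ^ (σ - 1)) (Ioo a y) :=
          (rpow_intOn2 (by linarith)).const_mul c
        have i2 : IntegrableOn (fun t => P t * (y - t) ^ (σ - 1)) (Ioo a y) := by
          apply Integrable.bdd_mul (c := ∫ t', |g' t'|) (rpow_intOn2 (by linarith))
          · exact ((intervalIntegral.continuous_primitive
              (fun _ _ => hg'i.intervalIntegrable) a).aestronglyMeasurable)
          · filter_upwards with t
            exact hPb t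
        rw [integral_add i1 i2, integral_const_mul, rpow_int_eval2 hay.le hσ]
        congr 1
        have hcong2 : ∀ t ∈ Ioo a y, P t * (y - t) ^ (σ - 1)
            = ∫ r in Ioo a t, g' r * (y - t) ^ (σ - 1) := by
          intro t ht
          rw [hPeq t ⟨ht.1, by linarith [ht.2]⟩, ← integral_mul_const]
        rw [setIntegral_congr_fun measurableSet_Ioo hcong2, hsw1.2, hXdef]
        apply setIntegral_congr_fun measurableSet_Ioo
        intro r hr
        show g' r * (∫ t in Ioo r y, (y - t) ^ (σ - 1)) = g' r * ((y - r) ^ σ / σ)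
        rw [rpow_int_eval2 hr.2.le hσ]
      -- RHS computation
      have hRHS : (∫ t in a..y, H t) = X := by
        rw [intervalIntegral.integral_of_le hay.le, integral_Ioc_eq_integral_Ioo]
        have hcong : ∀ t ∈ Ioo a y, H t = ∫ r in Ioo a t, g' r * (t - r) ^ (σ - 1) := by
          intro t ht
          have htm : t ∈ Ioo a b := ⟨ht.1, by linarith [ht.2]⟩
          simp only [hHdef]
          rw [Set.indicator_of_mem htm H0]
        rw [setIntegral_congr_fun measurableSet_Ioo hcong, hsw2.2, hXdef]
        apply setIntegral_congr_fun measurableSet_Ioo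
        intro r hr
        show g' r * (∫ t in Ioo r y, (t - r) ^ (σ - 1)) = g' r * ((y - r) ^ σ / σ)
        rw [rpow_int_eval hr.2.le hσ]
      simp only [RLint]
      rw [hLHS, hRHS]
      ring
    -- differentiate
    filter_upwards [ae_restrict_of_ae (ae_hasDerivAt_primitive hHint a),
      ae_restrict_mem measurableSet_Ioo] with x hFd hx
    have hxa : x - a ≠ 0 := by have := hx.1; intro h; linarith [sub_eq_zero.mp h]
    have d1 : HasDerivAt (fun y : ℝ => (y - a) ^ σ) (σ * (x - a) ^ (σ - 1)) x := by
      have h := Real.hasDerivAt_rpow_const (x := x - a) (p := σ) (Or.inl hxa)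
      have h2 := h.comp x ((hasDerivAt_id x).sub_const a)
      simpa [Function.comp_def] using h2
    have d2 : HasDerivAt (fun y => (Real.Gamma σ)⁻¹ * (c * ((y - a) ^ σ / σ))
          + (Real.Gamma σ)⁻¹ * ∫ t in a..y, H t)
        ((Real.Gamma σ)⁻¹ * (c * ((σ * (x - a) ^ (σ - 1)) / σ))
          + (Real.Gamma σ)⁻¹ * H x) x :=
      (((d1.div_const σ).const_mul c).const_mul ((Real.Gamma σ)⁻¹)).add
        (hFd.const_mul ((Real.Gamma σ)⁻¹))
    have heq : RLint a σ (fun w => c + ∫ t in a..w, g t)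
        =ᶠ[nhds x] (fun y => (Real.Gamma σ)⁻¹ * (c * ((y - a) ^ σ / σ))
          + (Real.Gamma σ)⁻¹ * ∫ t in a..y, H t) :=
      eventually_of_mem (Ioo_mem_nhds hx.1 hx.2) (fun y hy => hid y hy)
    have d3 := d2.congr_of_eventuallyEq heq
    -- identify the derivative value
    have hval : (Real.Gamma σ)⁻¹ * (c * ((σ * (x - a) ^ (σ - 1)) / σ))
          + (Real.Gamma σ)⁻¹ * H x
        = c * (x - a) ^ (-s) / Real.Gamma σ + RLint a σ g x := by
      have e1 : σ * (x - a) ^ (σ - 1) / σ = (x - a) ^ (-s) := by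
        rw [mul_comm, mul_div_assoc, div_self (ne_of_gt hσ), mul_one]
        rw [show σ - 1 = -s by rw [hσdef]; ring]
      have e2 : H x = ∫ t in a..x, g t * (x - t) ^ (σ - 1) := by
        simp only [hHdef]
        rw [Set.indicator_of_mem hx H0]
        simp only [hH0def]
        rw [intervalIntegral.integral_of_le hx.1.le, ← restrict_Ioo_eq_restrict_Ioc]
        apply integral_congr_ae
        have : g =ᵐ[volume.restrict (Ioo a x)] g' :=
          ae_restrict_of_ae_restrict_of_subset (Ioo_subset_Ioo le_rfl hx.2.le) hgg'
        filter_upwards [this] with t ht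
        rw [ht]
      rw [e1, e2]
      simp only [RLint]
      ring
    rw [← hval]
    exact d3
  · -- PART 2
    intro φ hφ
    obtain ⟨M, hM⟩ := isCompact_Icc.exists_bound_of_continuousOn hφ
    set φt : ℝ → ℝ := Set.IccExtend hab.le ((Icc a b).restrict φ) with hφtdef
    have hφtc : Continuous φt := (ContinuousOn.restrict hφ).Icc_extend'
    have hφteq : ∀ x ∈ Icc a b, φt x = φ x := by
      intro x hx
      rw [hφtdef]
      rw [Set.IccExtend_of_mem hab.le _ hx]
      rfl
    have hφtM : ∀ x, |φt x| ≤ M := by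
      intro x
      have h : φt x = φ ((Set.projIcc a b hab.le x) : ℝ) := rfl
      rw [h]
      exact hM _ (Set.projIcc a b hab.le x).2
    have hM0 : 0 ≤ M := (abs_nonneg _).trans (hφtM 0)
    have hmap : Tendsto (fun s : ℝ => 1 - s) (nhdsWithin 1 (Iio 1)) (nhdsWithin 0 (Ioi 0)) := by
      rw [tendsto_nhdsWithin_iff]
      constructor
      · have h1 : Tendsto (fun s : ℝ => 1 - s) (nhds 1) (nhds 0) :=
          (continuous_sub_left (1:ℝ)).tendsto' 1 0 (by norm_num)
        exact h1.mono_left nhdsWithin_le_nhds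
      · filter_upwards [self_mem_nhdsWithin] with s' hs'
        simpa using hs'
    have hΓc : Tendsto (fun s : ℝ => Real.Gamma (2 - s)) (nhdsWithin 1 (Iio 1)) (nhds 1) := by
      have hc : ContinuousAt Real.Gamma 1 := by
        apply (Real.differentiableAt_Gamma _).continuousAt
        intro m h
        have h2 : (0:ℝ) ≤ (m:ℝ) := Nat.cast_nonneg m
        linarith [h, h2]
      have h2 : Tendsto (fun s : ℝ => 2 - s) (nhdsWithin 1 (Iio 1)) (nhds 1) := by
        have h3 : Tendsto (fun s : ℝ => 2 - s) (nhds 1) (nhds 1) :=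
          (continuous_sub_left (2:ℝ)).tendsto' 1 1 (by norm_num)
        exact h3.mono_left nhdsWithin_le_nhds
      have := hc.tendsto.comp h2
      simpa [Real.Gamma_one, Function.comp_def] using this
    have hΓinv : Tendsto (fun s : ℝ => (Real.Gamma (2 - s))⁻¹) (nhdsWithin 1 (Iio 1)) (nhds 1) := by
      have := hΓc.inv₀ one_ne_zero
      simpa using this
    have hev01 : ∀ᶠ s : ℝ in nhdsWithin 1 (Iio 1), s ∈ Ioo (0:ℝ) 1 := by
      have h1 : ∀ᶠ s : ℝ in nhdsWithin 1 (Iio 1), (0:ℝ) < s :=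
        (eventually_gt_nhds one_pos).filter_mono nhdsWithin_le_nhds
      filter_upwards [h1, self_mem_nhdsWithin] with s' h1' h2'
      exact ⟨h1', h2'⟩
    have hevΓ : ∀ᶠ s : ℝ in nhdsWithin 1 (Iio 1), (1:ℝ)/2 ≤ Real.Gamma (2 - s) :=
      hΓc.eventually (eventually_ge_nhds (by norm_num))
    have hIooIoi : ∀ r : ℝ, a ≤ r → Ioo a b ∩ Ioi r = Ioo r b := by
      intro r har
      ext w
      simp only [mem_inter_iff, mem_Ioo, mem_Ioi]
      constructor
      · rintro ⟨⟨h1, h2⟩, h3⟩; exact ⟨h3, h2⟩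
      · rintro ⟨h1, h2⟩; exact ⟨⟨lt_of_le_of_lt har h1, h2⟩, h1⟩
    -- T1 convergence
    have hT1 : Tendsto (fun s : ℝ => (c * (Real.Gamma (2 - s))⁻¹)
          * ((1 - s) * ∫ x in Ioo a b, φt x * (x - a) ^ ((1 - s) - 1)))
        (nhdsWithin 1 (Iio 1)) (nhds ((c * 1) * φt a)) :=
      ((tendsto_const_nhds.mul hΓinv).mul ((approx_id hab hφtc hφtM).comp hmap))
    -- T2 convergence by dominated convergence
    have hT2 : Tendsto (fun s : ℝ => ∫ r in Ioo a b, g' r * ((Real.Gamma (2 - s))⁻¹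
          * ((1 - s) * ∫ x in Ioo r b, φt x * (x - r) ^ ((1 - s) - 1))))
        (nhdsWithin 1 (Iio 1)) (nhds (∫ r in Ioo a b, g' r * φt r)) := by
      apply tendsto_integral_filter_of_dominated_convergence
        (bound := fun r => |g' r| * (2 * (M * max 1 (b - a))))
      · filter_upwards [hev01] with s' hs'
        apply AEStronglyMeasurable.mul hg'm.aestronglyMeasurable
        apply AEStronglyMeasurable.const_mul
        apply AEStronglyMeasurable.const_mul
        have hFm : Measurable (fun p : ℝ × ℝ => ({q : ℝ × ℝ | q.1 < q.2}).indicator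
            (fun q => φt q.2 * (q.2 - q.1) ^ ((1 - s') - 1)) p) := by
          apply Measurable.indicator
          · exact (hφtc.measurable.comp measurable_snd).mul
              ((measurable_snd.sub measurable_fst).pow_const _)
          · exact measurableSet_lt measurable_fst measurable_snd
        have h1 := (hFm.aestronglyMeasurable
          (μ := (volume.restrict (Ioo a b)).prod (volume.restrict (Ioo a b)))).integral_prod_right'
        apply AEStronglyMeasurable.congr h1
        filter_upwards [ae_restrict_mem measurableSet_Ioo] with r hr
        have heq2 : (fun x => ({q : ℝ × ℝ | q.1 < q.2}).indicator
            (fun q => φt q.2 * (q.2 - q.1) ^ ((1 - s') - 1)) (r, x))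
            = (Ioi r).indicator (fun x => φt x * (x - r) ^ ((1 - s') - 1)) := by
          ext w
          simp only [Set.indicator, mem_setOf_eq, mem_Ioi]
        rw [heq2, integral_indicator measurableSet_Ioi,
          Measure.restrict_restrict measurableSet_Ioi, Set.inter_comm, hIooIoi r hr.1.le]
      · filter_upwards [hev01, hevΓ] with s' hs' hΓ'
        filter_upwards [ae_restrict_mem measurableSet_Ioo] with r hr
        have hσ' : 0 < 1 - s' := by linarith [hs'.2]
        have hσ'1 : 1 - s' ≤ 1 := by linarith [hs'.1]
        have hΓpos : (0:ℝ) < Real.Gamma (2 - s') := lt_of_lt_of_le (by norm_num) hΓ'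
        have hbr : 0 < b - r := by linarith [hr.2]
        have hkint : IntegrableOn (fun x => (x - r) ^ ((1 - s') - 1)) (Ioo r b) :=
          rpow_intOn (by linarith)
        have hJb : |∫ x in Ioo r b, φt x * (x - r) ^ ((1 - s') - 1)|
            ≤ M * ((b - r) ^ (1 - s') / (1 - s')) := by
          have h1 : |∫ x in Ioo r b, φt x * (x - r) ^ ((1 - s') - 1)|
              ≤ ∫ x in Ioo r b, |φt x * (x - r) ^ ((1 - s') - 1)| := by
            have := norm_integral_le_integral_norm (μ := volume.restrict (Ioo r b))
              (f := fun x => φt x * (x - r) ^ ((1 - s') - 1))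
            simpa only [Real.norm_eq_abs] using this
          have hi : IntegrableOn (fun x => φt x * (x - r) ^ ((1 - s') - 1)) (Ioo r b) := by
            apply Integrable.bdd_mul (c := M) hkint hφtc.aestronglyMeasurable
            filter_upwards with w
            exact hφtM w
          have h2 : (∫ x in Ioo r b, |φt x * (x - r) ^ ((1 - s') - 1)|)
              ≤ ∫ x in Ioo r b, M * (x - r) ^ ((1 - s') - 1) := by
            apply setIntegral_mono_on hi.abs (hkint.const_mul M) measurableSet_Ioo
            intro w hw
            have hk : (0:ℝ) ≤ (w - r) ^ ((1 - s') - 1) :=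
              Real.rpow_nonneg (by linarith [hw.1]) _
            rw [abs_mul, abs_of_nonneg hk]
            exact mul_le_mul_of_nonneg_right (hφtM w) hk
          rw [integral_const_mul, rpow_int_eval hr.2.le hσ'] at h2
          linarith
        have hJmax : (Real.Gamma (2 - s'))⁻¹
              * ((1 - s') * |∫ x in Ioo r b, φt x * (x - r) ^ ((1 - s') - 1)|)
            ≤ 2 * (M * max 1 (b - a)) := by
          have hinv2 : (Real.Gamma (2 - s'))⁻¹ ≤ 2 := by
            have h6 := inv_anti₀ (by norm_num : (0:ℝ) < 1/2) hΓ'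
            norm_num at h6
            exact h6
          have hstep : (1 - s') * |∫ x in Ioo r b, φt x * (x - r) ^ ((1 - s') - 1)|
              ≤ M * max 1 (b - a) := by
            have h3 : (1 - s') * |∫ x in Ioo r b, φt x * (x - r) ^ ((1 - s') - 1)|
                ≤ (1 - s') * (M * ((b - r) ^ (1 - s') / (1 - s'))) :=
              mul_le_mul_of_nonneg_left hJb hσ'.le
            have h4 : (1 - s') * (M * ((b - r) ^ (1 - s') / (1 - s')))
                = M * (b - r) ^ (1 - s') := by
              field_simp
            have h5 : (b - r) ^ (1 - s') ≤ max 1 (b - a) :=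
              pow_le_max hσ' hσ'1 hbr.le (by linarith [hr.1])
            calc (1 - s') * |∫ x in Ioo r b, φt x * (x - r) ^ ((1 - s') - 1)|
                ≤ M * (b - r) ^ (1 - s') := by rw [← h4]; exact h3
              _ ≤ M * max 1 (b - a) := mul_le_mul_of_nonneg_left h5 hM0
          calc (Real.Gamma (2 - s'))⁻¹
                * ((1 - s') * |∫ x in Ioo r b, φt x * (x - r) ^ ((1 - s') - 1)|)
              ≤ 2 * ((1 - s') * |∫ x in Ioo r b, φt x * (x - r) ^ ((1 - s') - 1)|) := by
                apply mul_le_mul_of_nonneg_right hinv2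
                positivity
            _ ≤ 2 * (M * max 1 (b - a)) := by
                apply mul_le_mul_of_nonneg_left hstep (by norm_num)
        calc ‖g' r * ((Real.Gamma (2 - s'))⁻¹
              * ((1 - s') * ∫ x in Ioo r b, φt x * (x - r) ^ ((1 - s') - 1)))‖
            = |g' r| * ((Real.Gamma (2 - s'))⁻¹
              * ((1 - s') * |∫ x in Ioo r b, φt x * (x - r) ^ ((1 - s') - 1)|)) := by
              rw [Real.norm_eq_abs, abs_mul, abs_mul, abs_mul,
                abs_of_nonneg (inv_nonneg.2 hΓpos.le), abs_of_nonneg hσ'.le]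
          _ ≤ |g' r| * (2 * (M * max 1 (b - a))) :=
              mul_le_mul_of_nonneg_left hJmax (abs_nonneg _)
      · exact (hg'on.abs).mul_const _
      · filter_upwards [ae_restrict_mem measurableSet_Ioo] with r hr
        have happ := (approx_id hr.2 hφtc hφtM).comp hmap
        have h1 := hΓinv.mul happ
        have h2 := h1.const_mul (g' r)
        simpa using h2
    -- the eventual identification of the integral
    have hcongr : ∀ᶠ s : ℝ in nhdsWithin 1 (Iio 1),
        (∫ x in Ioo a b, φ x * (c * (x - a) ^ (-s) / Real.Gamma (1 - s) + RLint a (1 - s) g x))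
        = (c * (Real.Gamma (2 - s))⁻¹)
            * ((1 - s) * ∫ x in Ioo a b, φt x * (x - a) ^ ((1 - s) - 1))
          + ∫ r in Ioo a b, g' r * ((Real.Gamma (2 - s))⁻¹
            * ((1 - s) * ∫ x in Ioo r b, φt x * (x - r) ^ ((1 - s) - 1))) := by
      filter_upwards [hev01] with s' hs'
      have hσ' : 0 < 1 - s' := by linarith [hs'.2]
      have hΓpos : (0:ℝ) < Real.Gamma (1 - s') := Real.Gamma_pos_of_pos hσ'
      have hΓeq : (Real.Gamma (1 - s'))⁻¹ = (1 - s') * (Real.Gamma (2 - s'))⁻¹ := by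
        have h := Real.Gamma_add_one (s := 1 - s') (ne_of_gt hσ')
        rw [show (2:ℝ) - s' = (1 - s') + 1 by ring, h, mul_inv, ← mul_assoc,
          mul_inv_cancel₀ (ne_of_gt hσ'), one_mul]
      -- triangle swaps at level b
      have hswapg : IntegrableOn
          (fun t => ∫ r in Ioo a t, g' r * (t - r) ^ ((1 - s') - 1)) (Ioo a b) ∧
          (∫ t in Ioo a b, (∫ r in Ioo a t, g' r * (t - r) ^ ((1 - s') - 1)))
            = ∫ r in Ioo a b, g' r * ∫ t in Ioo r b, (t - r) ^ ((1 - s') - 1) := by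
        apply triangle_swap hab hg'm hg'i.integrableOn (hKm2 ((1 - s') - 1))
          (fun r hr => rpow_intOn (by linarith)) (C := (b - a) ^ (1 - s') / (1 - s'))
        intro r hr
        have h1 : ∀ t ∈ Ioo r b, |(t - r) ^ ((1 - s') - 1)| = (t - r) ^ ((1 - s') - 1) :=
          fun t ht => abs_of_nonneg (Real.rpow_nonneg (by linarith [ht.1]) _)
        rw [setIntegral_congr_fun measurableSet_Ioo h1, rpow_int_eval hr.2.le hσ']
        have hmono : (b - r) ^ (1 - s') ≤ (b - a) ^ (1 - s') :=
          Real.rpow_le_rpow (by linarith [hr.2]) (by linarith [hr.1]) hσ'.le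
        exact (div_le_div_iff_of_pos_right hσ').mpr hmono
      have hswapφ : IntegrableOn
          (fun t => ∫ r in Ioo a t, g' r * (φt t * (t - r) ^ ((1 - s') - 1))) (Ioo a b) ∧
          (∫ t in Ioo a b, (∫ r in Ioo a t, g' r * (φt t * (t - r) ^ ((1 - s') - 1))))
            = ∫ r in Ioo a b, g' r * ∫ t in Ioo r b, φt t * (t - r) ^ ((1 - s') - 1) := by
        apply triangle_swap hab hg'm hg'i.integrableOn
          (K := fun t r => φt t * (t - r) ^ ((1 - s') - 1))
          ((hφtc.measurable.comp measurable_fst).mul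
            ((measurable_fst.sub measurable_snd).pow_const _))
          (C := M * ((b - a) ^ (1 - s') / (1 - s')))
        · intro r hr
          apply Integrable.bdd_mul (c := M) (rpow_intOn (by linarith))
            hφtc.aestronglyMeasurable
          filter_upwards with w
          exact hφtM w
        · intro r hr
          have hi : IntegrableOn (fun t => (t - r) ^ ((1 - s') - 1)) (Ioo r b) :=
            rpow_intOn (by linarith)
          have h2 : (∫ t in Ioo r b, |φt t * (t - r) ^ ((1 - s') - 1)|)
              ≤ ∫ t in Ioo r b, M * (t - r) ^ ((1 - s') - 1) := by
            apply setIntegral_mono_on _ (hi.const_mul M) measurableSet_Ioo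
            · intro w hw
              have hk : (0:ℝ) ≤ (w - r) ^ ((1 - s') - 1) :=
                Real.rpow_nonneg (by linarith [hw.1]) _
              rw [abs_mul, abs_of_nonneg hk]
              exact mul_le_mul_of_nonneg_right (hφtM w) hk
            · apply MeasureTheory.Integrable.abs
              apply Integrable.bdd_mul (c := M) hi hφtc.aestronglyMeasurable
              filter_upwards with w
              exact hφtM w
          rw [integral_const_mul, rpow_int_eval hr.2.le hσ'] at h2
          have hmono : (b - r) ^ (1 - s') ≤ (b - a) ^ (1 - s') :=
            Real.rpow_le_rpow (by linarith [hr.2]) (by linarith [hr.1]) hσ'.le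
          calc (∫ t in Ioo r b, |φt t * (t - r) ^ ((1 - s') - 1)|)
              ≤ M * ((b - r) ^ (1 - s') / (1 - s')) := h2
            _ ≤ M * ((b - a) ^ (1 - s') / (1 - s')) := by
                apply mul_le_mul_of_nonneg_left _ hM0
                exact (div_le_div_iff_of_pos_right hσ').mpr hmono
      -- rewrite the integrand
      have hRL : ∀ x ∈ Ioo a b, RLint a (1 - s') g x = (Real.Gamma (1 - s'))⁻¹
          * ∫ r in Ioo a x, g' r * (x - r) ^ ((1 - s') - 1) := by
        intro x hx
        simp only [RLint]
        congr 1
        rw [intervalIntegral.integral_of_le hx.1.le, ← restrict_Ioo_eq_restrict_Ioc]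
        apply integral_congr_ae
        filter_upwards [ae_restrict_of_ae_restrict_of_subset
          (Ioo_subset_Ioo le_rfl hx.2.le) hgg'] with t ht
        rw [ht]
      have hstep1 : (∫ x in Ioo a b,
            φ x * (c * (x - a) ^ (-s') / Real.Gamma (1 - s') + RLint a (1 - s') g x))
          = ∫ x in Ioo a b,
            (φt x * ((c * (Real.Gamma (1 - s'))⁻¹) * (x - a) ^ ((1 - s') - 1))
              + φt x * ((Real.Gamma (1 - s'))⁻¹
                * ∫ r in Ioo a x, g' r * (x - r) ^ ((1 - s') - 1))) := by
        apply setIntegral_congr_fun measurableSet_Ioo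
        intro x hx
        beta_reduce
        rw [← hφteq x (Ioo_subset_Icc_self hx), hRL x hx,
          show -s' = (1 - s') - 1 by ring]
        ring
      have iA : IntegrableOn
          (fun x => φt x * ((c * (Real.Gamma (1 - s'))⁻¹) * (x - a) ^ ((1 - s') - 1)))
          (Ioo a b) := by
        apply Integrable.bdd_mul (c := M)
          ((rpow_intOn (by linarith)).const_mul _) hφtc.aestronglyMeasurable
        filter_upwards with w
        exact hφtM w
      have iB : IntegrableOn
          (fun x => φt x * ((Real.Gamma (1 - s'))⁻¹
            * ∫ r in Ioo a x, g' r * (x - r) ^ ((1 - s') - 1))) (Ioo a b) := by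
        apply Integrable.bdd_mul (c := M) (hswapg.1.const_mul _)
          hφtc.aestronglyMeasurable
        filter_upwards with w
        exact hφtM w
      rw [hstep1, integral_add iA iB]
      congr 1
      · -- first piece equals T1 term
        have h1 : (∫ x in Ioo a b,
              φt x * ((c * (Real.Gamma (1 - s'))⁻¹) * (x - a) ^ ((1 - s') - 1)))
            = (c * (Real.Gamma (1 - s'))⁻¹)
              * ∫ x in Ioo a b, φt x * (x - a) ^ ((1 - s') - 1) := by
          rw [← integral_const_mul]
          apply setIntegral_congr_fun measurableSet_Ioo
          intro x hx
          ring
        rw [h1, hΓeq]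
        ring
      · -- second piece equals T2 term
        have h1 : ∀ x : ℝ, φt x * ((Real.Gamma (1 - s'))⁻¹
              * ∫ r in Ioo a x, g' r * (x - r) ^ ((1 - s') - 1))
            = (Real.Gamma (1 - s'))⁻¹
              * ∫ r in Ioo a x, g' r * (φt x * (x - r) ^ ((1 - s') - 1)) := by
          intro x
          have h2 : (∫ r in Ioo a x, g' r * (φt x * (x - r) ^ ((1 - s') - 1)))
              = φt x * ∫ r in Ioo a x, g' r * (x - r) ^ ((1 - s') - 1) := by
            rw [← integral_const_mul]
            apply integral_congr_ae
            filter_upwards with r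
            ring
          rw [h2]
          ring
        rw [show (fun x => φt x * ((Real.Gamma (1 - s'))⁻¹
              * ∫ r in Ioo a x, g' r * (x - r) ^ ((1 - s') - 1)))
            = (fun x => (Real.Gamma (1 - s'))⁻¹
              * ∫ r in Ioo a x, g' r * (φt x * (x - r) ^ ((1 - s') - 1)))
          from funext h1]
        rw [integral_const_mul, hswapφ.2, ← integral_const_mul]
        apply integral_congr_ae
        filter_upwards with r
        rw [hΓeq]
        ring
    -- conclude
    have hfin := hT1.add hT2
    have hval2 : (c * 1) * φt a + (∫ r in Ioo a b, g' r * φt r)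
        = (∫ x in Ioo a b, φ x * g x) + c * φ a := by
      have h1 : (∫ r in Ioo a b, g' r * φt r) = ∫ x in Ioo a b, φ x * g x := by
        apply integral_congr_ae
        filter_upwards [hgg', ae_restrict_mem measurableSet_Ioo] with r h1 h2
        rw [← h1, hφteq r (Ioo_subset_Icc_self h2)]
        ring
      rw [h1, hφteq a ⟨le_rfl, hab.le⟩]
      ring
    rw [hval2] at hfin
    exact Tendsto.congr' (hcongr.mono fun s h => h.symm) hfin
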